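/- Let κ ≥ 0 be an integer, let r' ≥ 3 be an odd integer, set r = 2^κ · r', let N be a positive integer with 2r < N, let n be a positive integer with N² ≤ 2^n, let m be a positive integer, and let h be an integer with 1 ≤ |h| ≤ 2. Then ∑_{s=1}^{r−1} (1/(2^n·m)) · |∑_{k=0}^{m−1} exp(2πi·k·r·(⌊s·2^n/r⌉ + h)/2^n)|² = 2^κ · (1/(2^n·m)) · ∑_{j=1}^{(r'−1)/2} [ sin²(π·m·r·(h + j/r')/2^n)/sin²(π·r·(h + j/r')/2^n) + sin²(π·m·r·(h − j/r')/2^n)/sin²(π·r·(h − j/r')/2^n) ] + (2^κ − 1) · (1/(2^n·m)) · sin²(π·m·r·h/2^n)/sin²(π·r·h/2^n). -/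

import Mathlib

open Real Complex

noncomputable def myD (r' c : ℕ) : ℝ := (c : ℝ) / r' - round ((c : ℝ) / r')

noncomputable def myRatio (n m r : ℕ) (x : ℝ) : ℝ :=
  Real.sin (Real.pi * m * r * x / 2 ^ n) ^ 2 / Real.sin (Real.pi * r * x / 2 ^ n) ^ 2



lemma aux_abs_sq (x : ℝ) :
    (‖Complex.exp (x * Complex.I) - 1‖) ^ 2 = 4 * Real.sin (x / 2) ^ 2 := by
  have he : Complex.exp (x * Complex.I) - 1
      = ((Real.cos x - 1 : ℝ) : ℂ) + ((Real.sin x : ℝ) : ℂ) * Complex.I := by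
    rw [Complex.exp_mul_I, ← Complex.ofReal_cos, ← Complex.ofReal_sin]
    push_cast; ring
  rw [Complex.sq_norm, he, Complex.normSq_add_mul_I]
  have hc : Real.cos x = Real.cos (x/2)^2 - Real.sin (x/2)^2 := by
    have := Real.cos_two_mul' (x/2)
    rw [show 2*(x/2) = x by ring] at this
    linarith
  nlinarith [Real.sin_sq_add_cos_sq (x/2), Real.sin_sq_add_cos_sq x]

lemma aux_kernel (θ : ℝ) (m : ℕ) (hθ : Real.sin (θ / 2) ≠ 0) :
    (‖∑ k ∈ Finset.range m, Complex.exp ((k : ℂ) * (θ : ℂ) * Complex.I)‖) ^ 2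
      = Real.sin (m * θ / 2) ^ 2 / Real.sin (θ / 2) ^ 2 := by
  have hz : Complex.exp ((θ : ℂ) * Complex.I) ≠ 1 := by
    intro he
    rw [Complex.exp_eq_one_iff] at he
    obtain ⟨k, hk⟩ := he
    have h1 : (θ : ℂ) = (k : ℂ) * (2 * Real.pi) := by
      refine mul_right_cancel₀ Complex.I_ne_zero ?_
      rw [hk]; ring
    have h2 : θ = (k : ℝ) * (2 * Real.pi) := by exact_mod_cast h1
    apply hθ
    rw [h2, show (k:ℝ) * (2*Real.pi) / 2 = k * Real.pi by ring]
    exact Real.sin_int_mul_pi k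
  have hsum : ∑ k ∈ Finset.range m, Complex.exp ((k : ℂ) * (θ : ℂ) * Complex.I)
      = (Complex.exp ((θ:ℂ) * Complex.I) ^ m - 1) / (Complex.exp ((θ:ℂ) * Complex.I) - 1) := by
    rw [← geom_sum_eq hz]
    refine Finset.sum_congr rfl fun k _ => ?_
    rw [← Complex.exp_nat_mul]; ring_nf
  rw [hsum, norm_div, div_pow, ← Complex.exp_nat_mul]
  have h1 : ((m:ℂ) * ((θ:ℂ) * Complex.I)) = ((m * θ : ℝ) : ℂ) * Complex.I := by push_cast; ring
  rw [h1, aux_abs_sq, aux_abs_sq]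
  rw [show (m * θ : ℝ)/2 = m * θ / 2 by ring]
  field_simp


lemma aux_sum_mod (f : ℕ → ℝ) (a b : ℕ) :
    ∑ i ∈ Finset.range (a * b), f (i % b) = a * ∑ i ∈ Finset.range b, f i := by
  induction a with
  | zero => simp
  | succ a ih =>
    rw [Nat.succ_mul, Finset.sum_range_add, ih]
    have h : ∀ i ∈ Finset.range b, f ((a * b + i) % b) = f i := by
      intro i hi
      rw [Finset.mem_range] at hi
      rw [Nat.add_comm, Nat.add_mul_mod_self_right, Nat.mod_eq_of_lt hi]
    rw [Finset.sum_congr rfl h]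
    push_cast; ring

lemma aux_inv (b t u c : ℕ) (hu : t * u % b = 1) (hc : c < b) :
    c * t % b * u % b = c := by
  rw [Nat.mod_mul_mod, mul_assoc, Nat.mul_mod, hu, mul_one, Nat.mod_mod_of_dvd _ dvd_rfl,
    Nat.mod_eq_of_lt hc]

lemma aux_sum_mul_mod (f : ℕ → ℝ) (b t : ℕ) (hb : 1 < b) (ht : Nat.Coprime t b) :
    ∑ c ∈ Finset.range b, f (c * t % b) = ∑ c ∈ Finset.range b, f c := by
  obtain ⟨u, -, hu⟩ := Nat.exists_mul_mod_eq_one_of_coprime ht hb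
  refine Finset.sum_nbij' (i := fun c => c * t % b) (j := fun c => c * u % b) ?_ ?_ ?_ ?_ ?_
  · intro c hc; exact Finset.mem_range.mpr (Nat.mod_lt _ (by omega))
  · intro c hc; exact Finset.mem_range.mpr (Nat.mod_lt _ (by omega))
  · intro c hc
    exact aux_inv b t u c hu (Finset.mem_range.mp hc)
  · intro c hc
    have hu' : u * t % b = 1 := by rwa [Nat.mul_comm] at hu
    exact aux_inv b u t c hu' (Finset.mem_range.mp hc)
  · intro c hc; rfl

lemma aux_split (G : ℕ → ℝ) (M : ℕ) :
    ∑ c ∈ Finset.range (2 * M + 1), G c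
      = G 0 + ∑ j ∈ Finset.Icc 1 M, (G j + G (2 * M + 1 - j)) := by
  have h1 : ∑ c ∈ Finset.range (2 * M + 1), G c
      = (∑ c ∈ Finset.range (M + 1), G c) + ∑ i ∈ Finset.range M, G (M + 1 + i) := by
    rw [show 2 * M + 1 = (M + 1) + M from by omega, Finset.sum_range_add]
  have h2 : ∑ c ∈ Finset.range (M + 1), G c = G 0 + ∑ i ∈ Finset.range M, G (1 + i) := by
    rw [Finset.sum_range_succ']
    simp [add_comm]
  have h3 : ∑ i ∈ Finset.range M, G (M + 1 + i) = ∑ i ∈ Finset.range M, G (2 * M - i) := by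
    rw [← Finset.sum_range_reflect]
    refine Finset.sum_congr rfl fun i hi => ?_
    rw [Finset.mem_range] at hi
    congr 1; omega
  have h4 : ∑ j ∈ Finset.Icc 1 M, (G j + G (2 * M + 1 - j))
      = ∑ i ∈ Finset.range M, (G (1 + i) + G (2 * M - i)) := by
    rw [show Finset.Icc 1 M = Finset.Ico 1 (M + 1) by rfl, Finset.sum_Ico_eq_sum_range]
    refine Finset.sum_congr (by congr 1) fun i hi => ?_
    rw [Finset.mem_range] at hi
    congr 2
    omega
  rw [h1, h2, h3, h4, Finset.sum_add_distrib]
  ring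

lemma step1 (κ r' n N m K : ℕ) (hr'3 : 3 ≤ r') (r : ℕ) (hr : r = 2 ^ κ * r')
    (h2r : 2 * r < N) (hN2 : N ^ 2 ≤ 2 ^ n) (hK : n = κ + K)
    (h : ℤ) (hh1 : 1 ≤ |h|) (hh2 : |h| ≤ 2) (s : ℕ) :
    (‖∑ k ∈ Finset.range m,
        Complex.exp (2 * Real.pi * Complex.I * k * r *
          (((round (((s : ℝ) * 2 ^ n) / r) : ℤ) : ℂ) + (h : ℂ)) / 2 ^ n)‖) ^ 2
      = myRatio n m r ((h : ℝ) - myD r' (s * 2 ^ K % r')) := by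
  have hr'0 : (0:ℝ) < r' := by positivity
  have hr0 : 0 < r := by rw [hr]; positivity
  have hr3 : 3 ≤ r := by
    calc 3 ≤ r' := hr'3
    _ ≤ 2 ^ κ * r' := Nat.le_mul_of_pos_left _ (by positivity)
    _ = r := hr.symm
  set c := s * 2 ^ K % r' with hc
  set q := s * 2 ^ K / r' with hq
  have hdm : r' * q + c = s * 2 ^ K := Nat.div_add_mod _ _
  have hreal : (s : ℝ) * 2 ^ n / r = q + (c : ℝ) / r' := by
    have h1 : (s : ℝ) * 2 ^ n / r = ((s * 2 ^ K : ℕ) : ℝ) / r' := by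
      rw [hK, hr]; push_cast [pow_add]; field_simp
    rw [h1, ← hdm]; push_cast; field_simp
  set R : ℤ := round ((c : ℝ) / r') with hR
  have hround : round ((s : ℝ) * 2 ^ n / r) = (q : ℤ) + R := by
    rw [hreal, round_natCast_add]
  set x0 : ℝ := (h : ℝ) - myD r' c with hx0
  set θ : ℝ := 2 * Real.pi * r * x0 / 2 ^ n with hθdef
  -- nonvanishing of sin (θ/2)
  have hd2 : |myD r' c| ≤ 1 / 2 := abs_sub_round _
  have hh1' : (1:ℝ) ≤ |(h : ℝ)| := by exact_mod_cast (by exact_mod_cast hh1 : (1:ℤ) ≤ |h|)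
  have hh2' : |(h : ℝ)| ≤ 2 := by
    have : ((|h| : ℤ) : ℝ) ≤ 2 := by exact_mod_cast hh2
    rwa [Int.cast_abs] at this
  have hx0u : |x0| ≤ 5 / 2 := by
    calc |x0| ≤ |(h : ℝ)| + |myD r' c| := abs_sub _ _
    _ ≤ 2 + 1 / 2 := by linarith
    _ = 5 / 2 := by norm_num
  have hx0n : x0 ≠ 0 := by
    intro h0
    have : |(h : ℝ)| ≤ 1 / 2 := by
      have : (h : ℝ) = myD r' c := by linarith [sub_eq_zero.mp h0]
      rw [this]; exact hd2
    linarith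
  have h2n : (3 * r : ℝ) < 2 ^ n := by
    have h1 : (2 * r) ^ 2 < N ^ 2 := Nat.pow_lt_pow_left h2r two_ne_zero
    have h2 : 3 * r < 2 ^ n := by nlinarith [hN2, hr3]
    exact_mod_cast h2
  have hsin : Real.sin (θ / 2) ≠ 0 := by
    have harg : θ / 2 = Real.pi * r * x0 / 2 ^ n := by rw [hθdef]; ring
    rw [harg]
    have hrpos : (0:ℝ) < r := by exact_mod_cast hr0
    have habs : |Real.pi * r * x0 / 2 ^ n| < Real.pi := by
      have h0 : |Real.pi * r * x0 / 2 ^ n| = Real.pi * r * |x0| / 2 ^ n := by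
        rw [abs_div, abs_mul, abs_mul, _root_.abs_of_pos Real.pi_pos, Nat.abs_cast,
          _root_.abs_of_pos (by positivity : (0:ℝ) < (2:ℝ)^n)]
      rw [h0, div_lt_iff₀ (by positivity)]
      have hB : (0:ℝ) ≤ Real.pi * r := by positivity
      have hA := mul_le_mul_of_nonneg_left hx0u hB
      have hC := mul_lt_mul_of_pos_left h2n Real.pi_pos
      nlinarith [hA, hC, hB]
    intro hzero
    have h1 : Real.pi * r * x0 / 2 ^ n = 0 :=
      (Real.sin_eq_zero_iff_of_lt_of_lt (by linarith [abs_lt.mp habs]) (by linarith [abs_lt.mp habs])).mp hzero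
    have : Real.pi * r * x0 = 0 := by
      field_simp at h1
      simpa using h1
    rcases mul_eq_zero.mp this with h2 | h2
    · rcases mul_eq_zero.mp h2 with h3 | h3
      · exact Real.pi_ne_zero h3
      · have : (0:ℝ) < r := by exact_mod_cast hr0
        linarith
    · exact hx0n h2
  -- rewrite each exponential
  have hNatC : (s : ℂ) * 2 ^ n = r * q + 2 ^ κ * c := by
    have hnn : s * 2 ^ n = r * q + 2 ^ κ * c := by
      calc s * 2 ^ n = 2 ^ κ * (s * 2 ^ K) := by rw [hK, pow_add]; ring
      _ = 2 ^ κ * (r' * q + c) := by rw [hdm]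
      _ = r * q + 2 ^ κ * c := by rw [hr]; ring
    exact_mod_cast hnn
  have hA : ∀ k : ℕ, (2 * (Real.pi:ℂ) * Complex.I * k * r *
        (((round (((s : ℝ) * 2 ^ n) / r) : ℤ) : ℂ) + (h : ℂ)) / 2 ^ n)
      = ((k * s : ℕ) : ℂ) * (2 * Real.pi * Complex.I) + (k : ℂ) * (θ : ℂ) * Complex.I := by
    intro k
    rw [hround]
    have hθC : (θ : ℂ) = 2 * Real.pi * r * ((h : ℂ) - ((c : ℂ) / r' - (R : ℂ))) / 2 ^ n := by
      rw [hθdef, hx0]; unfold myD; push_cast; ring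
    rw [hθC]
    have hr'C : (r' : ℂ) ≠ 0 := by exact_mod_cast hr'0.ne'
    have h2nC : ((2:ℂ) ^ n) ≠ 0 := pow_ne_zero _ two_ne_zero
    field_simp
    push_cast
    have hrC : (r : ℂ) = 2 ^ κ * r' := by exact_mod_cast hr
    linear_combination (-((k:ℂ) * (r':ℂ))) * hNatC
      + ((k:ℂ) * (c:ℂ)) * hrC
  have hsum : ∀ k ∈ Finset.range m, Complex.exp (2 * Real.pi * Complex.I * k * r *
        (((round (((s : ℝ) * 2 ^ n) / r) : ℤ) : ℂ) + (h : ℂ)) / 2 ^ n)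
      = Complex.exp ((k : ℂ) * (θ : ℂ) * Complex.I) := by
    intro k _
    rw [hA k, Complex.exp_add]
    have h1 : Complex.exp (((k * s : ℕ) : ℂ) * (2 * Real.pi * Complex.I)) = 1 := by
      have := Complex.exp_int_mul_two_pi_mul_I ((k * s : ℕ) : ℤ)
      push_cast at this ⊢
      exact this
    rw [h1, one_mul]
  rw [Finset.sum_congr rfl hsum, aux_kernel θ m hsin]
  unfold myRatio
  rw [show m * θ / 2 = Real.pi * m * r * x0 / 2 ^ n by rw [hθdef]; ring,
    show θ / 2 = Real.pi * r * x0 / 2 ^ n by rw [hθdef]; ring]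

theorem stmt_17 (κ r' n N m : ℕ) (hr'3 : 3 ≤ r') (hodd : Odd r')
    (r : ℕ) (hr : r = 2 ^ κ * r') (hN : 0 < N) (h2r : 2 * r < N)
    (hn : 0 < n) (hN2 : N ^ 2 ≤ 2 ^ n) (hm : 0 < m)
    (h : ℤ) (hh1 : 1 ≤ |h|) (hh2 : |h| ≤ 2) :
    ∑ s ∈ Finset.Icc 1 (r - 1),
        (1 / ((2 : ℝ) ^ n * m)) *
          (‖∑ k ∈ Finset.range m,
            Complex.exp (2 * Real.pi * Complex.I * k * r *
              (((round (((s : ℝ) * 2 ^ n) / r) : ℤ) : ℂ) + (h : ℂ)) / 2 ^ n)‖) ^ 2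
      =
    (2 : ℝ) ^ κ * (1 / ((2 : ℝ) ^ n * m)) *
        ∑ j ∈ Finset.Icc 1 ((r' - 1) / 2),
          (Real.sin (Real.pi * m * r * ((h : ℝ) + (j : ℝ) / r') / 2 ^ n) ^ 2 /
              Real.sin (Real.pi * r * ((h : ℝ) + (j : ℝ) / r') / 2 ^ n) ^ 2
            + Real.sin (Real.pi * m * r * ((h : ℝ) - (j : ℝ) / r') / 2 ^ n) ^ 2 /
              Real.sin (Real.pi * r * ((h : ℝ) - (j : ℝ) / r') / 2 ^ n) ^ 2)
      + ((2 : ℝ) ^ κ - 1) * (1 / ((2 : ℝ) ^ n * m)) *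
          (Real.sin (Real.pi * m * r * h / 2 ^ n) ^ 2 /
            Real.sin (Real.pi * r * h / 2 ^ n) ^ 2) := by
  obtain ⟨w, hw⟩ := hodd
  set M := (r' - 1) / 2 with hMdef
  have hM : r' = 2 * M + 1 := by omega
  have hκn : κ < n := by
    have h1 : 2 ^ κ ≤ r := by rw [hr]; exact Nat.le_mul_of_pos_right _ (by omega)
    have h2 : 2 ^ κ < 2 ^ n := by
      have h3 : N ≤ N ^ 2 := by nlinarith
      omega
    exact (Nat.pow_lt_pow_iff_right (by norm_num)).mp h2
  set K := n - κ with hKdef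
  have hK : n = κ + K := by omega
  have hrpos : 0 < r := by rw [hr]; positivity
  have hr'0 : (0:ℝ) < r' := by positivity
  set C : ℝ := 1 / ((2 : ℝ) ^ n * m) with hC
  set F : ℕ → ℝ := fun c => C * myRatio n m r ((h : ℝ) - myD r' c) with hF
  -- step 1: rewrite each term of the LHS
  have e2 : ∑ s ∈ Finset.Icc 1 (r - 1),
      (1 / ((2 : ℝ) ^ n * m)) *
        (‖∑ k ∈ Finset.range m,
          Complex.exp (2 * Real.pi * Complex.I * k * r *
            (((round (((s : ℝ) * 2 ^ n) / r) : ℤ) : ℂ) + (h : ℂ)) / 2 ^ n)‖) ^ 2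
      = ∑ s ∈ Finset.Icc 1 (r - 1), F (s * 2 ^ K % r') := by
    refine Finset.sum_congr rfl fun s _ => ?_
    rw [step1 κ r' n N m K hr'3 r hr h2r hN2 hK h hh1 hh2 s]
  rw [e2]
  have e3 : Finset.range r = insert 0 (Finset.Icc 1 (r - 1)) := by
    ext x; simp [Finset.mem_range, Finset.mem_Icc]; omega
  have e4 : ∑ s ∈ Finset.range r, F (s * 2 ^ K % r')
      = F 0 + ∑ s ∈ Finset.Icc 1 (r - 1), F (s * 2 ^ K % r') := by
    rw [e3, Finset.sum_insert (by simp)]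
    congr 1
    simp
  have e5 : ∑ s ∈ Finset.range r, F (s * 2 ^ K % r')
      = (2 ^ κ : ℕ) * ∑ c ∈ Finset.range r', F (c * 2 ^ K % r') := by
    have h5 := aux_sum_mod (fun c => F (c * 2 ^ K % r')) (2 ^ κ) r'
    rw [← hr] at h5
    rw [← h5]
    refine Finset.sum_congr rfl fun s _ => ?_
    show F (s * 2 ^ K % r') = F (s % r' * 2 ^ K % r')
    rw [Nat.mod_mul_mod]
  have hcop : Nat.Coprime (2 ^ K) r' := by
    refine Nat.Coprime.pow_left _ ?_
    refine (Nat.prime_two.coprime_iff_not_dvd).mpr ?_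
    omega
  have e6 : ∑ c ∈ Finset.range r', F (c * 2 ^ K % r') = ∑ c ∈ Finset.range r', F c :=
    aux_sum_mul_mod F r' (2 ^ K) (by omega) hcop
  have e7 : ∑ c ∈ Finset.range r', F c
      = F 0 + ∑ j ∈ Finset.Icc 1 M, (F j + F (r' - j)) := by
    rw [hM, aux_split F M]
  -- value of F at 0
  have hF0 : F 0 = C * (Real.sin (Real.pi * m * r * h / 2 ^ n) ^ 2 /
      Real.sin (Real.pi * r * h / 2 ^ n) ^ 2) := by
    simp [hF, myD, myRatio]
  -- values of F at j and r' - j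
  have hpair : ∀ j ∈ Finset.Icc 1 M, F j + F (r' - j)
      = C * (Real.sin (Real.pi * m * r * ((h : ℝ) + (j : ℝ) / r') / 2 ^ n) ^ 2 /
              Real.sin (Real.pi * r * ((h : ℝ) + (j : ℝ) / r') / 2 ^ n) ^ 2
            + Real.sin (Real.pi * m * r * ((h : ℝ) - (j : ℝ) / r') / 2 ^ n) ^ 2 /
              Real.sin (Real.pi * r * ((h : ℝ) - (j : ℝ) / r') / 2 ^ n) ^ 2) := by
    intro j hj
    rw [Finset.mem_Icc] at hj
    have hDj : myD r' j = (j : ℝ) / r' := by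
      unfold myD
      have hrd0 : round ((j : ℝ) / r') = 0 := by
        rw [round_eq_zero_iff, Set.mem_Ico]
        constructor
        · have : (0:ℝ) ≤ (j : ℝ) / r' := by positivity
          linarith
        · rw [div_lt_iff₀ hr'0]
          have h2j : ((2 * j : ℕ) : ℝ) < (r' : ℝ) := by exact_mod_cast (by omega : 2 * j < r')
          push_cast at h2j; linarith
      rw [hrd0]; simp
    have hcast : ((r' - j : ℕ) : ℝ) = (r' : ℝ) - j := by
      rw [Nat.cast_sub (by omega)]
    have hDj' : myD r' (r' - j) = -((j : ℝ) / r') := by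
      unfold myD
      rw [hcast]
      have hrd : round (((r' : ℝ) - j) / r') = 1 := by
        rw [round_eq]
        have hx1 : (1 : ℝ) ≤ ((r' : ℝ) - j) / r' + 1 / 2 := by
          rw [← sub_nonneg]
          have key : ((r' : ℝ) - j) / r' + 1 / 2 - 1 = ((r' : ℝ) - 2 * j) / (2 * r') := by
            field_simp; ring
          rw [key]
          apply div_nonneg
          · have h2j : ((2 * j : ℕ) : ℝ) ≤ (r' : ℝ) := by exact_mod_cast (by omega : 2 * j ≤ r')
            push_cast at h2j; linarith
          · linarith
        have hx2 : ((r' : ℝ) - j) / r' + 1 / 2 < 2 := by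
          have hlt : ((r' : ℝ) - j) / r' < 1 := by
            rw [div_lt_one hr'0]
            have : (1 : ℝ) ≤ (j : ℝ) := by exact_mod_cast hj.1
            linarith
          linarith
        refine Int.floor_eq_iff.mpr ⟨by exact_mod_cast hx1, by push_cast; linarith⟩
      rw [hrd]
      push_cast
      field_simp
      ring
    simp only [hF]
    rw [hDj, hDj', sub_neg_eq_add]
    unfold myRatio
    ring
  -- final assembly
  have etot : ∑ s ∈ Finset.Icc 1 (r - 1), F (s * 2 ^ K % r')
      = ((2 ^ κ : ℕ) : ℝ) * (F 0 + ∑ j ∈ Finset.Icc 1 M, (F j + F (r' - j))) - F 0 := by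
    rw [← e7, ← e6, ← e5, e4]; ring
  rw [etot, hF0, Finset.sum_congr rfl hpair, ← Finset.mul_sum]
  push_cast
  ring
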